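/- Let G be a locally compact second countable group and let {Γ_n} be a mostly Farber sequence of lattices in G. If the sequence {Γ_n} is nowhere thin, then {Γ_n} is a Farber sequence. -/

import Mathlib

open MeasureTheory Filter Topology
open scoped ENNReal

noncomputable section

variable (G : Type*) [Group G] [TopologicalSpace G] [IsTopologicalGroup G]
  [LocallyCompactSpace G] [SecondCountableTopology G]
  [MeasurableSpace G] [BorelSpace G]

/-- `Γ` is a lattice in `G`: a discrete subgroup together with a Borel fundamental domain
`s` for the right translation action of `Γ` on `G` of finite Haar measure (the covolume). -/
def IsLatticeWithFundDom (lam : Measure G) (Γ : Subgroup G) (s : Set G) : Prop :=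
  DiscreteTopology Γ ∧ MeasurableSet s ∧ (∀ g : G, ∃! γ : Γ, g * (γ : G) ∈ s) ∧ lam s < ⊤

/-- The sequence of lattices `Γ n` (with fundamental domains `s n`) is Farber: for every
precompact neighborhood `U` of the identity, the normalized Haar measure of the set of
`g ∈ s n` such that `g (Γ n) g⁻¹ ∩ U ≠ {1}` tends to `0`. -/
def IsFarberSeq (lam : Measure G) (Γ : ℕ → Subgroup G) (s : ℕ → Set G) : Prop :=
  ∀ U : Set G, U ∈ 𝓝 (1 : G) → IsCompact (closure U) →
    Tendsto (fun n => lam {g ∈ s n | ∃ γ ∈ Γ n, γ ≠ 1 ∧ g * γ * g⁻¹ ∈ U} / lam (s n))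
      atTop (𝓝 0)

/-- The sequence of lattices `Γ n` (with fundamental domains `s n`) is mostly Farber: for all
precompact neighborhoods `U ⊆ V` of the identity, the normalized Haar measure of the set of
`g ∈ s n` such that `g (Γ n) g⁻¹ ∩ V ⊆ U` tends to `1`. -/
def IsMostlyFarberSeq (lam : Measure G) (Γ : ℕ → Subgroup G) (s : ℕ → Set G) : Prop :=
  ∀ U V : Set G, U ∈ 𝓝 (1 : G) → V ∈ 𝓝 (1 : G) → U ⊆ V →
    IsCompact (closure U) → IsCompact (closure V) →
    Tendsto
      (fun n => lam {g ∈ s n | ∀ γ ∈ Γ n, g * γ * g⁻¹ ∈ V → g * γ * g⁻¹ ∈ U} / lam (s n))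
      atTop (𝓝 1)

/-- The sequence of lattices `Γ n` is nowhere thin: there is a neighborhood `U` of the
identity such that `g (Γ n) g⁻¹ ∩ U = {1}` for every `g ∈ G` and every `n`. -/
def IsNowhereThin (Γ : ℕ → Subgroup G) : Prop :=
  ∃ U ∈ 𝓝 (1 : G), ∀ g : G, ∀ n : ℕ,
    ((fun γ => g * γ * g⁻¹) '' (Γ n : Set G)) ∩ U = {1}

/-- A mostly Farber sequence of lattices which is nowhere thin is Farber. -/
theorem isFarberSeq_of_isMostlyFarberSeq_of_nowhereThin
    (lam : Measure G) [lam.IsHaarMeasure]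
    (Γ : ℕ → Subgroup G) (s : ℕ → Set G)
    (hlattice : ∀ n, IsLatticeWithFundDom G lam (Γ n) (s n))
    (hmostly : IsMostlyFarberSeq G lam Γ s)
    (hthin : IsNowhereThin G Γ) :
    IsFarberSeq G lam Γ s := by
  obtain ⟨U₀, hU₀, hU₀thin⟩ := hthin
  intro U hU hUc
  -- pick a compact neighborhood inside U₀
  obtain ⟨K, hK1, hKsub, hKcomp⟩ := local_compact_nhds hU₀
  set U' : Set G := interior K with hU'def
  have hU'nhds : U' ∈ 𝓝 (1 : G) :=
    isOpen_interior.mem_nhds (mem_interior_iff_mem_nhds.mpr hK1)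
  have hU'open : IsOpen U' := isOpen_interior
  have hU'c : IsCompact (closure U') :=
    hKcomp.closure.of_isClosed_subset isClosed_closure (closure_mono interior_subset)
  have hU'sub : U' ⊆ U₀ := interior_subset.trans hKsub
  set V' : Set G := closure U ∪ closure U' with hV'def
  have hV'closed : IsClosed V' := isClosed_closure.union isClosed_closure
  have hV'nhds : V' ∈ 𝓝 (1 : G) :=
    Filter.mem_of_superset hU ((subset_closure).trans Set.subset_union_left)
  have hUV' : U' ⊆ V' := (subset_closure).trans Set.subset_union_right
  have hV'c : IsCompact (closure V') := by
    rw [hV'closed.closure_eq]; exact hUc.union hU'c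
  have hmain := hmostly U' V' hU'nhds hV'nhds hUV' hU'c hV'c
  -- notation
  set good : ℕ → Set G := fun n =>
    {g ∈ s n | ∀ γ ∈ Γ n, g * γ * g⁻¹ ∈ V' → g * γ * g⁻¹ ∈ U'} with hgood
  set bad : ℕ → Set G := fun n =>
    {g ∈ s n | ∃ γ ∈ Γ n, γ ≠ 1 ∧ g * γ * g⁻¹ ∈ U} with hbad
  -- good is measurable
  have hgoodMeas : ∀ n, MeasurableSet (good n) := by
    intro n
    have hdisc : DiscreteTopology (Γ n) := (hlattice n).1
    have hcnt : ((Γ n : Set G)).Countable := by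
      have : Countable (Γ n) := TopologicalSpace.separableSpace_iff_countable.mp inferInstance
      exact (Set.countable_coe_iff.mp this)
    have : good n = s n ∩ ⋂ γ ∈ (Γ n : Set G),
        (fun g : G => g * γ * g⁻¹) ⁻¹' (V'ᶜ ∪ U') := by
      ext g
      simp only [hgood, Set.mem_setOf_eq, Set.mem_inter_iff, Set.mem_iInter,
        Set.mem_preimage, Set.mem_union, Set.mem_compl_iff, SetLike.mem_coe]
      constructor
      · rintro ⟨hs, h⟩
        exact ⟨hs, fun γ hγ => or_iff_not_imp_left.mpr fun hv => h γ hγ (not_not.mp hv)⟩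
      · rintro ⟨hs, h⟩
        exact ⟨hs, fun γ hγ hv => ((h γ hγ).resolve_left (not_not.mpr hv))⟩
    rw [this]
    refine ((hlattice n).2.1).inter (MeasurableSet.biInter hcnt fun γ _ => ?_)
    have hcont : Continuous fun g : G => g * γ * g⁻¹ :=
      ((continuous_id.mul continuous_const).mul (continuous_id.inv))
    exact hcont.measurable (hV'closed.measurableSet.compl.union hU'open.measurableSet)
  -- bad n ⊆ s n \ good n
  have hsubset : ∀ n, bad n ⊆ s n \ good n := by
    intro n g hg
    obtain ⟨hs, γ, hγΓ, hγne, hγU⟩ := hg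
    refine ⟨hs, fun hgood' => ?_⟩
    have hγV' : g * γ * g⁻¹ ∈ V' := Set.subset_union_left (subset_closure hγU)
    have hγU' : g * γ * g⁻¹ ∈ U₀ := hU'sub (hgood'.2 γ hγΓ hγV')
    have : g * γ * g⁻¹ ∈ ((fun γ => g * γ * g⁻¹) '' (Γ n : Set G)) ∩ U₀ :=
      ⟨⟨γ, hγΓ, rfl⟩, hγU'⟩
    rw [hU₀thin g n] at this
    apply hγne
    have h1 : g * γ * g⁻¹ = 1 := this
    have : γ = (1 : G) := by
      have := congrArg (fun x => g⁻¹ * x * g) h1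
      simpa [mul_assoc] using this
    exact this
  -- key bound
  have hbound : ∀ n, lam (bad n) / lam (s n) ≤ 1 - lam (good n) / lam (s n) := by
    intro n
    have hfin : lam (s n) ≠ ⊤ := (hlattice n).2.2.2.ne
    have hgs : good n ⊆ s n := fun g hg => hg.1
    have hgle : lam (good n) ≤ lam (s n) := measure_mono hgs
    have h1 : lam (bad n) ≤ lam (s n) - lam (good n) := by
      calc lam (bad n) ≤ lam (s n \ good n) := measure_mono (hsubset n)
        _ = lam (s n) - lam (good n) :=
          measure_diff hgs (hgoodMeas n).nullMeasurableSet (hgle.trans_lt (lt_top_iff_ne_top.mpr hfin)).ne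
    have h2 : lam (bad n) / lam (s n) ≤ (lam (s n) - lam (good n)) / lam (s n) :=
      ENNReal.div_le_div_right h1 _
    refine h2.trans ?_
    refine ENNReal.le_sub_of_add_le_right ?_ ?_
    · by_cases h0 : lam (s n) = 0
      · have : lam (good n) = 0 := le_antisymm (h0 ▸ hgle) zero_le
        simp [this]
      · exact (ENNReal.div_lt_top (hgle.trans_lt (lt_top_iff_ne_top.mpr hfin)).ne h0).ne
    · rw [ENNReal.div_add_div_same, tsub_add_cancel_of_le hgle]
      exact ENNReal.div_self_le_one
  -- squeeze
  have hlim : Tendsto (fun n => 1 - lam (good n) / lam (s n)) atTop (𝓝 0) := by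
    have := ENNReal.Tendsto.sub (tendsto_const_nhds (x := (1 : ℝ≥0∞))) hmain
      (Or.inl ENNReal.one_ne_top)
    simpa using this
  exact tendsto_of_tendsto_of_tendsto_of_le_of_le tendsto_const_nhds hlim
    (fun n => zero_le) hbound


end
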